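/- Let ū_h ∈ U, ȳ_h ∈ Y, and w̄_h ∈ W be arbitrary; set ŷ := A⁻¹(Bū_h) and ρ_y := Aȳ_h − Bū_h ∈ W*. Let κ be any real number with 0 < κ ≤ 1 and κ‖B*ŵ‖_X ≤ α (in particular κ = min{α/‖B*ŵ‖_X, 1} is admissible). Then ‖Cŷ − Cȳ‖_G² ≤ 2(J_α(ū_h, ŷ) − J_α(ū, ȳ)) ≤ 2(α‖ū_h‖_{X*} − ū_h(B*w̄_h)) + 2κ·ū_h(B*(w̄_h − ŵ)) + 2(1 − κ)·ū_h(B*w̄_h) + ‖C(A⁻¹ρ_y) + (κ − 1)(Cȳ_h − g^δ)‖_G². -/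

import Mathlib

set_option maxHeartbeats 1000000


open RealInnerProductSpace NormedSpace

/-- A posteriori error estimate for Banach space norm regularization of a
PDE-constrained problem, with scaling factor κ for the dual variable. -/
theorem stmt_14
    {X G Y W : Type*}
    [NormedAddCommGroup X] [NormedSpace ℝ X] [CompleteSpace X]
    [NormedAddCommGroup G] [InnerProductSpace ℝ G] [CompleteSpace G]
    [NormedAddCommGroup Y] [NormedSpace ℝ Y] [CompleteSpace Y]
    [NormedAddCommGroup W] [NormedSpace ℝ W] [CompleteSpace W]
    (A : Y ≃L[ℝ] StrongDual ℝ W) (Astar : W ≃L[ℝ] StrongDual ℝ Y)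
    (hAadj : ∀ (y : Y) (w : W), A y w = Astar w y)
    (Bstar : W →L[ℝ] X) (B : StrongDual ℝ X →L[ℝ] StrongDual ℝ W)
    (hB : ∀ (u : StrongDual ℝ X) (w : W), B u w = u (Bstar w))
    (C : Y →L[ℝ] G) (Cstar : G →L[ℝ] StrongDual ℝ Y)
    (hCadj : ∀ (y : Y) (g : G), ⟪C y, g⟫ = Cstar g y)
    (gδ : G) (α : ℝ) (hα : 0 < α)
    (Jα : StrongDual ℝ X → Y → ℝ)
    (hJ : ∀ u y, Jα u y = (1/2) * ‖C y - gδ‖^2 + α * ‖u‖)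
    (ubar : StrongDual ℝ X) (ybar : Y) (hybar : ybar = A.symm (B ubar))
    (hmin : ∀ u : StrongDual ℝ X, Jα ubar ybar ≤ Jα u (A.symm (B u)))
    (yh : Y) (what : W)
    (hwhat : what = Astar.symm (-(Cstar (C yh - gδ))))
    (uh : StrongDual ℝ X) (wh : W)
    (κ : ℝ) (hκ0 : 0 < κ) (hκ1 : κ ≤ 1) (hκα : κ * ‖Bstar what‖ ≤ α) :
    ‖C (A.symm (B uh)) - C ybar‖^2 ≤
      2 * (Jα uh (A.symm (B uh)) - Jα ubar ybar) ∧
    2 * (Jα uh (A.symm (B uh)) - Jα ubar ybar) ≤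
      2 * (α * ‖uh‖ - uh (Bstar wh))
      + 2 * κ * (uh (Bstar (wh - what)))
      + 2 * (1 - κ) * (uh (Bstar wh))
      + ‖C (A.symm (A yh - B uh)) + (κ - 1) • (C yh - gδ)‖^2 := by
  set p : G := C (A.symm (B uh)) with hp
  set d : G := C ybar with hd
  set q : G := C yh with hq
  -- key adjoint identity: u (B* ŵ) = -⟪C (A⁻¹ B u), q - gδ⟫
  have key : ∀ u : StrongDual ℝ X, u (Bstar what) = -⟪C (A.symm (B u)), q - gδ⟫ := by
    intro u
    have h2 : Astar what = -(Cstar (q - gδ)) := by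
      rw [hwhat, Astar.apply_symm_apply]
    calc u (Bstar what) = B u what := (hB u what).symm
      _ = A (A.symm (B u)) what := by rw [A.apply_symm_apply]
      _ = Astar what (A.symm (B u)) := hAadj _ _
      _ = (-(Cstar (q - gδ))) (A.symm (B u)) := by rw [h2]
      _ = -(Cstar (q - gδ) (A.symm (B u))) := ContinuousLinearMap.neg_apply _ _
      _ = -⟪C (A.symm (B u)), q - gδ⟫ := by rw [hCadj]
  -- Part 1 : variational inequality
  have hσ : 0 ≤ ⟪d - gδ, p - d⟫ + α * ‖uh‖ - α * ‖ubar‖ := by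
    have hstep : ∀ t : ℝ, 0 < t → t ≤ 1 →
        0 ≤ ⟪d - gδ, p - d⟫ + α * ‖uh‖ - α * ‖ubar‖ + t / 2 * ‖p - d‖ ^ 2 := by
      intro t ht0 ht1
      have h1 := hmin (ubar + t • (uh - ubar))
      have hlin : A.symm (B (ubar + t • (uh - ubar)))
          = ybar + t • (A.symm (B uh) - ybar) := by
        rw [hybar]; simp [map_add, map_smul, map_sub, smul_sub]
      have hClin : C (ybar + t • (A.symm (B uh) - ybar)) - gδ
          = (d - gδ) + t • (p - d) := by
        simp only [map_add, map_smul, map_sub, hp, hd]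
        abel
      have hquad : ‖(d - gδ) + t • (p - d)‖ ^ 2
          = ‖d - gδ‖ ^ 2 + 2 * (t * ⟪d - gδ, p - d⟫) + t ^ 2 * ‖p - d‖ ^ 2 := by
        rw [norm_add_sq_real, real_inner_smul_right, norm_smul]
        rw [Real.norm_eq_abs, abs_of_pos ht0]
        ring
      have hnorm : ‖ubar + t • (uh - ubar)‖ ≤ (1 - t) * ‖ubar‖ + t * ‖uh‖ := by
        have : ubar + t • (uh - ubar) = (1 - t) • ubar + t • uh := by
          module
        rw [this]
        refine le_trans (norm_add_le _ _) ?_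
        rw [norm_smul, norm_smul, Real.norm_eq_abs, Real.norm_eq_abs,
          abs_of_nonneg (by linarith), abs_of_pos ht0]
      rw [hJ, hJ, hlin, hClin, hquad] at h1
      have h2 : α * ‖ubar + t • (uh - ubar)‖
          ≤ α * ‖ubar‖ - t * (α * ‖ubar‖) + t * (α * ‖uh‖) := by
        have := mul_le_mul_of_nonneg_left hnorm hα.le
        nlinarith [this]
      have h4 : 0 ≤ t * (⟪d - gδ, p - d⟫ + α * ‖uh‖ - α * ‖ubar‖
          + t / 2 * ‖p - d‖ ^ 2) := by nlinarith [h1, h2]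
      nlinarith [h4, mul_pos ht0 ht0]
    by_contra hcon
    push_neg at hcon
    set σ := ⟪d - gδ, p - d⟫ + α * ‖uh‖ - α * ‖ubar‖ with hσdef
    set M := ‖p - d‖ ^ 2 with hM
    have hM0 : 0 ≤ M := sq_nonneg _
    rcases eq_or_lt_of_le hM0 with hM0' | hM0'
    · have := hstep 1 one_pos le_rfl
      rw [← hM0'] at this; linarith
    · have ht0 : 0 < min 1 (-σ / M) :=
        lt_min one_pos (div_pos (by linarith) hM0')
      have := hstep _ ht0 (min_le_left _ _)
      have h2 : min 1 (-σ / M) ≤ -σ / M := min_le_right _ _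
      have h2' : min 1 (-σ / M) * M ≤ -σ := (le_div_iff₀ hM0').mp h2
      linarith
  have hexp1 : ‖p - gδ‖ ^ 2 = ‖d - gδ‖ ^ 2 + 2 * ⟪d - gδ, p - d⟫ + ‖p - d‖ ^ 2 := by
    have : p - gδ = (d - gδ) + (p - d) := by abel
    rw [this, norm_add_sq_real]
  constructor
  · rw [hJ, hJ]
    rw [← hp, ← hd]
    nlinarith [hσ, hexp1]
  · -- Part 2
    rw [hJ, hJ, ← hp, ← hd]
    have huhBw : uh (Bstar (wh - what)) = uh (Bstar wh) - uh (Bstar what) := by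
      rw [map_sub, map_sub]
    have hkey_uh : uh (Bstar what) = -⟪p, q - gδ⟫ := key uh
    have hkey_ubar : ubar (Bstar what) = -⟪d, q - gδ⟫ := by
      have := key ubar
      rw [← hybar] at this
      exact this
    -- dual bound : κ * ubar (B* ŵ) ≤ α ‖ubar‖
    have hdual : κ * ubar (Bstar what) ≤ α * ‖ubar‖ := by
      have h1 : ubar (Bstar what) ≤ ‖ubar‖ * ‖Bstar what‖ :=
        le_trans (le_abs_self _) (ubar.le_opNorm _)
      calc κ * ubar (Bstar what) ≤ κ * (‖ubar‖ * ‖Bstar what‖) := by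
            exact mul_le_mul_of_nonneg_left h1 hκ0.le
        _ = ‖ubar‖ * (κ * ‖Bstar what‖) := by ring
        _ ≤ ‖ubar‖ * α := mul_le_mul_of_nonneg_left hκα (norm_nonneg _)
        _ = α * ‖ubar‖ := mul_comm _ _
    have hdual' : -(κ * ⟪d, q - gδ⟫) ≤ α * ‖ubar‖ := by
      rw [hkey_ubar] at hdual; linarith
    -- the residual term
    have hres : C (A.symm (A yh - B uh)) + (κ - 1) • (q - gδ) = κ • (q - gδ) - (p - gδ) := by
      have : A.symm (A yh - B uh) = yh - A.symm (B uh) := by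
        rw [map_sub, A.symm_apply_apply]
      rw [this, map_sub, ← hq, ← hp]
      module
    rw [hres, huhBw, hkey_uh]
    -- expansions
    have e1 : ‖κ • (q - gδ) - (p - gδ)‖ ^ 2
        = κ ^ 2 * ‖q - gδ‖ ^ 2 - 2 * (κ * ⟪q - gδ, p - gδ⟫) + ‖p - gδ‖ ^ 2 := by
      rw [norm_sub_sq_real, norm_smul, real_inner_smul_left, Real.norm_eq_abs,
        abs_of_pos hκ0]
      ring
    have e2 : 0 ≤ ‖κ • (q - gδ) - (d - gδ)‖ ^ 2 := sq_nonneg _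
    have e3 : ‖κ • (q - gδ) - (d - gδ)‖ ^ 2
        = κ ^ 2 * ‖q - gδ‖ ^ 2 - 2 * (κ * ⟪q - gδ, d - gδ⟫) + ‖d - gδ‖ ^ 2 := by
      rw [norm_sub_sq_real, norm_smul, real_inner_smul_left, Real.norm_eq_abs,
        abs_of_pos hκ0]
      ring
    have e4 : ⟪p, q - gδ⟫ = ⟪q - gδ, p - gδ⟫ + ⟪q - gδ, gδ⟫ := by
      rw [← inner_add_right]
      rw [real_inner_comm]
      congr 1
      abel
    have e5 : ⟪d, q - gδ⟫ = ⟪q - gδ, d - gδ⟫ + ⟪q - gδ, gδ⟫ := by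
      rw [← inner_add_right]
      rw [real_inner_comm]
      congr 1
      abel
    rw [e1] at *
    nlinarith [hdual', e2, e3, e4, e5]
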